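/- Let n ≥ 1 and let μ₁, …, μₙ be finite measures on the interval [0,1], each absolutely continuous with respect to Lebesgue measure, such that μᵢ([0,1]) = D for every i, where D is a positive real number. Let d₁, …, dₙ be positive real numbers with d₁ + ⋯ + dₙ = D. Then there exists a measurable partition X₁, …, Xₙ of [0,1] (the Xᵢ are pairwise disjoint measurable sets whose union is [0,1]) such that μᵢ(Xᵢ) ≥ dᵢ for every i. -/

import Mathlib

open MeasureTheory Set
open scoped ENNReal

namespace PropDiv

lemma noAtoms_of_ac {μ : Measure ℝ} (hac : μ ≪ volume) : NoAtoms μ :=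
  ⟨fun x => hac (Real.volume_singleton)⟩

lemma exists_winner
    {n : ℕ} (μ : Fin n → Measure ℝ) [∀ i, IsFiniteMeasure (μ i)]
    (hac : ∀ i, μ i ≪ volume)
    (d : Fin n → ℝ) (hd : ∀ i, 0 < d i)
    (s : Finset (Fin n)) (hs : s.Nonempty)
    (S : Set ℝ) (hSm : MeasurableSet S) (hSsub : S ⊆ Icc 0 1)
    (hval : ∀ i ∈ s, ENNReal.ofReal (∑ j ∈ s, d j) ≤ μ i S) :
    ∃ i ∈ s, ∃ A : Set ℝ, MeasurableSet A ∧ A ⊆ S ∧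
      ENNReal.ofReal (d i) ≤ μ i A ∧
      ∀ j ∈ s, ENNReal.ofReal ((∑ j ∈ s, d j) - d i) ≤ μ j (S \ A) := by
  classical
  set R : ℝ := ∑ j ∈ s, d j with hRdef
  have hR : 0 < R := Finset.sum_pos (fun i _ => hd i) hs
  -- basic facts about μ i S
  have hmtop : ∀ i, μ i S ≠ ⊤ := fun i => measure_ne_top _ _
  have hm0 : ∀ i ∈ s, μ i S ≠ 0 := by
    intro i hi h0
    have h1 : ENNReal.ofReal R = 0 := le_zero_iff.mp (h0 ▸ hval i hi)
    rw [ENNReal.ofReal_eq_zero] at h1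
    linarith
  have hmR : ∀ i ∈ s, R ≤ (μ i S).toReal := by
    intro i hi
    have := ENNReal.toReal_mono (hmtop i) (hval i hi)
    rwa [ENNReal.toReal_ofReal hR.le] at this
  -- normalized densities
  set h : Fin n → ℝ → ℝ≥0∞ := fun i x => (μ i S)⁻¹ * (μ i).rnDeriv volume x with hhdef
  have hmeas_h : ∀ i, Measurable (h i) := fun i =>
    (Measure.measurable_rnDeriv _ _).const_mul _
  have hint : ∀ j, ∀ B : Set ℝ, (μ j S)⁻¹ * μ j B = ∫⁻ x in B, h j x ∂volume := by
    intro j B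
    rw [hhdef]
    simp only
    rw [lintegral_const_mul _ (Measure.measurable_rnDeriv _ _),
      Measure.setLIntegral_rnDeriv (hac j)]
  have hcomp : ∀ i j, ∀ B : Set ℝ, (∀ x ∈ B, h j x ≤ h i x) →
      (μ j S)⁻¹ * μ j B ≤ (μ i S)⁻¹ * μ i B := by
    intro i j B hB
    rw [hint, hint]
    exact setLIntegral_mono (hmeas_h i) hB
  -- argmax regions with tie-breaking
  set Q : Fin n → Set ℝ := fun i =>
    {x | (∀ j ∈ s, h j x ≤ h i x) ∧ ∀ k ∈ s, k < i → ¬ (∀ j ∈ s, h j x ≤ h k x)} with hQdef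
  have hmQ : ∀ i, MeasurableSet (Q i) := by
    intro i
    have h1 : ∀ j k : Fin n, MeasurableSet {x | h j x ≤ h k x} := fun j k =>
      measurableSet_le (hmeas_h j) (hmeas_h k)
    have : Q i = (⋂ j ∈ s, {x | h j x ≤ h i x}) ∩
        (⋂ k ∈ s, ⋂ _h : k < i, ⋃ j ∈ s, {x | h j x ≤ h k x}ᶜ) := by
      ext x
      simp only [hQdef, mem_setOf_eq, mem_inter_iff, mem_iInter, mem_iUnion, mem_compl_iff]
      constructor
      · rintro ⟨h1, h2⟩
        refine ⟨h1, fun k hk hki => ?_⟩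
        have := h2 k hk hki
        push_neg at this
        obtain ⟨j, hj, hjx⟩ := this
        exact ⟨j, hj, not_le.mpr hjx⟩
      · rintro ⟨h1, h2⟩
        refine ⟨h1, fun k hk hki hall => ?_⟩
        obtain ⟨j, hj, hjx⟩ := h2 k hk hki
        exact hjx (hall j hj)
    rw [this]
    refine (MeasurableSet.biInter (Set.to_countable _) fun j _ => h1 j i).inter
      (MeasurableSet.biInter (Set.to_countable _) fun k _ =>
        MeasurableSet.iInter fun _ =>
          MeasurableSet.biUnion (Set.to_countable _) fun j _ => (h1 j k).compl)
  set P : Fin n → Set ℝ := fun i => S ∩ Q i with hPdef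
  have hmP : ∀ i, MeasurableSet (P i) := fun i => hSm.inter (hmQ i)
  have hPsub : ∀ i, P i ⊆ S := fun i => inter_subset_left
  -- cover
  have hcover : ⋃ i ∈ s, P i = S := by
    apply subset_antisymm
    · exact iUnion₂_subset fun i _ => hPsub i
    · intro x hx
      set t : Finset (Fin n) := s.filter (fun i => ∀ j ∈ s, h j x ≤ h i x) with htdef
      have ht : t.Nonempty := by
        obtain ⟨i, hi, hmax⟩ := s.exists_max_image (fun i => h i x) hs
        exact ⟨i, Finset.mem_filter.mpr ⟨hi, hmax⟩⟩
      set i₀ := t.min' ht with hi₀def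
      have hi₀t : i₀ ∈ t := t.min'_mem ht
      rw [Finset.mem_filter] at hi₀t
      refine mem_iUnion₂.mpr ⟨i₀, hi₀t.1, hx, hi₀t.2, fun k hk hki hall => ?_⟩
      have hkt : k ∈ t := Finset.mem_filter.mpr ⟨hk, hall⟩
      exact absurd (t.min'_le k hkt) (not_le.mpr hki)
  -- pairwise disjoint
  have hPdis : (↑s : Set (Fin n)).PairwiseDisjoint P := by
    intro i hi j hj hij
    rw [Finset.mem_coe] at hi hj
    have key : ∀ a b : Fin n, a ∈ s → a < b → Disjoint (P a) (P b) := by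
      intro a b ha hab
      rw [Set.disjoint_left]
      rintro x ⟨_, hxa⟩ ⟨_, hxb⟩
      exact hxb.2 a ha hab hxa.1
    rcases lt_or_gt_of_ne hij with hlt | hgt
    · exact key i j hi hlt
    · exact (key j i hj hgt).symm
  have hSsum : ∀ j ∈ s, ∑ i ∈ s, μ j (P i) = μ j S := by
    intro j _
    rw [← measure_biUnion_finset hPdis (fun i _ => hmP i), hcover]
  -- pointwise domination on P i
  have hPdom : ∀ i, ∀ j ∈ s, ∀ x ∈ P i, h j x ≤ h i x := by
    intro i j hj x hx
    exact hx.2.1 j hj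
  -- counting argument
  obtain ⟨j₀, hj₀⟩ := hs
  have hge1 : (1 : ℝ≥0∞) ≤ ∑ i ∈ s, (μ i S)⁻¹ * μ i (P i) := by
    calc (1 : ℝ≥0∞) = (μ j₀ S)⁻¹ * μ j₀ S :=
          (ENNReal.inv_mul_cancel (hm0 j₀ hj₀) (hmtop j₀)).symm
      _ = (μ j₀ S)⁻¹ * ∑ i ∈ s, μ j₀ (P i) := by rw [hSsum j₀ hj₀]
      _ = ∑ i ∈ s, (μ j₀ S)⁻¹ * μ j₀ (P i) := Finset.mul_sum _ _ _
      _ ≤ ∑ i ∈ s, (μ i S)⁻¹ * μ i (P i) :=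
          Finset.sum_le_sum fun i _ => hcomp i j₀ (P i) (hPdom i j₀ hj₀)
  have hsum1 : ∑ i ∈ s, ENNReal.ofReal (d i / R) = 1 := by
    rw [← ENNReal.ofReal_sum_of_nonneg (fun i _ => div_nonneg (hd i).le hR.le), ← Finset.sum_div,
      ← hRdef, div_self hR.ne', ENNReal.ofReal_one]
  obtain ⟨i₀, hi₀s, hwin⟩ := ENNReal.exists_le_of_sum_le (⟨j₀, hj₀⟩ : s.Nonempty)
    (le_trans (le_of_eq hsum1) hge1)
  -- hwin : ENNReal.ofReal (d i₀ / R) ≤ (μ i₀ S)⁻¹ * μ i₀ (P i₀)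
  have hdile : d i₀ ≤ R := by
    rw [hRdef]
    exact Finset.single_le_sum (fun i _ => (hd i).le) hi₀s
  set E : Set ℝ := P i₀ with hEdef
  have hEm : MeasurableSet E := hmP i₀
  have hEsub : E ⊆ S := hPsub i₀
  haveI : NullSingletonClass (μ i₀) := noAtoms_of_ac (hac i₀)
  set g : ℝ → ℝ := E.indicator fun _ => (1:ℝ) with hgdef
  have hgint : Integrable g (μ i₀) := (integrable_const (1:ℝ)).indicator hEm
  set f : ℝ → ℝ := fun t => ∫ x in (-1:ℝ)..t, g x ∂(μ i₀) with hfdef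
  have hfc : Continuous f := hgint.continuous_primitive (-1)
  have hft : ∀ t : ℝ, -1 ≤ t → f t = (μ i₀ (E ∩ Iic t)).toReal := by
    intro t ht
    have hEIoc : E ∩ Iic t = E ∩ Ioc (-1) t := by
      ext x
      constructor
      · rintro ⟨hxE, hxt⟩
        have hx01 := hSsub (hEsub hxE)
        exact ⟨hxE, by linarith [hx01.1], hxt⟩
      · rintro ⟨hxE, _, hxt⟩
        exact ⟨hxE, hxt⟩
    rw [hfdef]
    simp only
    rw [intervalIntegral.integral_of_le ht, hgdef]
    rw [MeasureTheory.integral_indicator hEm, Measure.restrict_restrict hEm,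
      setIntegral_const, smul_eq_mul, mul_one, hEIoc, measureReal_def]
  -- abbreviations for real values
  set MS : ℝ := (μ i₀ S).toReal with hMSdef
  have hMSpos : 0 < MS := lt_of_lt_of_le hR (hmR i₀ hi₀s)
  set τ : ℝ := d i₀ / R * MS with hτdef
  have hτ0 : 0 ≤ τ := mul_nonneg (div_nonneg (hd i₀).le hR.le) hMSpos.le
  have hwin' : d i₀ / R ≤ (μ i₀ E).toReal / MS := by
    have hfin : (μ i₀ S)⁻¹ * μ i₀ E ≠ ⊤ :=
      ENNReal.mul_ne_top (ENNReal.inv_ne_top.mpr (hm0 i₀ hi₀s)) (measure_ne_top _ _)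
    have := ENNReal.toReal_mono hfin hwin
    rwa [ENNReal.toReal_ofReal (div_nonneg (hd i₀).le hR.le), ENNReal.toReal_mul,
      ENNReal.toReal_inv, inv_mul_eq_div] at this
  have hτle : τ ≤ f 1 := by
    have hE1 : E ∩ Iic 1 = E := inter_eq_self_of_subset_left
      (fun x hx => (hSsub (hEsub hx)).2)
    rw [hft 1 (by norm_num), hE1]
    calc τ = d i₀ / R * MS := hτdef
      _ ≤ (μ i₀ E).toReal / MS * MS := by
          exact mul_le_mul_of_nonneg_right hwin' hMSpos.le
      _ = (μ i₀ E).toReal := by field_simp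
  have hf0 : f (-1) = 0 := intervalIntegral.integral_same
  obtain ⟨t, htI, htτ⟩ := intermediate_value_Icc (by norm_num : (-1:ℝ) ≤ 1)
    hfc.continuousOn ⟨by rw [hf0]; exact hτ0, hτle⟩
  set A : Set ℝ := E ∩ Iic t with hAdef
  have hAm : MeasurableSet A := hEm.inter measurableSet_Iic
  have hAsub : A ⊆ S := fun x hx => hEsub hx.1
  have hAτ : (μ i₀ A).toReal = τ := by rw [hAdef, ← hft t htI.1]; exact htτ
  refine ⟨i₀, hi₀s, A, hAm, hAsub, ?_, ?_⟩
  · refine ENNReal.ofReal_le_of_le_toReal ?_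
    rw [hAτ, hτdef]
    calc d i₀ = d i₀ / R * R := by field_simp
      _ ≤ d i₀ / R * MS := mul_le_mul_of_nonneg_left (hmR i₀ hi₀s)
          (div_nonneg (hd i₀).le hR.le)
  · intro j hj
    have hcmp := hcomp i₀ j A (fun x hx => hPdom i₀ j hj x hx.1)
    set MSj : ℝ := (μ j S).toReal with hMSjdef
    set MAj : ℝ := (μ j A).toReal with hMAjdef
    have hMSjR : R ≤ MSj := hmR j hj
    have hcmp' : MAj / MSj ≤ d i₀ / R := by
      have hfin : (μ i₀ S)⁻¹ * μ i₀ A ≠ ⊤ :=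
        ENNReal.mul_ne_top (ENNReal.inv_ne_top.mpr (hm0 i₀ hi₀s)) (measure_ne_top _ _)
      have h2 := ENNReal.toReal_mono hfin hcmp
      rw [ENNReal.toReal_mul, ENNReal.toReal_mul, ENNReal.toReal_inv, ENNReal.toReal_inv,
        inv_mul_eq_div, inv_mul_eq_div, ← hMSjdef, ← hMAjdef, ← hMSdef, hAτ, hτdef] at h2
      calc MAj / MSj ≤ d i₀ / R * MS / MS := h2
        _ = d i₀ / R := by rw [mul_div_assoc, div_self hMSpos.ne', mul_one]
    have hMAjle : MAj ≤ d i₀ / R * MSj := by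
      have := mul_le_mul_of_nonneg_right hcmp' (le_trans hR.le hMSjR)
      rwa [div_mul_cancel₀ _ (by linarith : MSj ≠ 0)] at this
    have hdiff : (μ j (S \ A)).toReal = MSj - MAj := by
      rw [measure_diff hAsub hAm.nullMeasurableSet (measure_ne_top (μ j) A),
        ENNReal.toReal_sub_of_le (measure_mono hAsub) (hmtop j)]
    refine ENNReal.ofReal_le_of_le_toReal ?_
    rw [hdiff]
    have e1 : (1 - d i₀ / R) * R = R - d i₀ := by field_simp
    have e2 : (1 - d i₀ / R) * MSj = MSj - d i₀ / R * MSj := by ring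
    have e3 : (1 - d i₀ / R) * R ≤ (1 - d i₀ / R) * MSj := by
      apply mul_le_mul_of_nonneg_left hMSjR
      have : d i₀ / R ≤ 1 := (div_le_one hR).mpr hdile
      linarith
    linarith

lemma key
    {n : ℕ} (μ : Fin n → Measure ℝ) [∀ i, IsFiniteMeasure (μ i)]
    (hac : ∀ i, μ i ≪ volume)
    (d : Fin n → ℝ) (hd : ∀ i, 0 < d i) :
    ∀ s : Finset (Fin n), s.Nonempty → ∀ S : Set ℝ, MeasurableSet S → S ⊆ Icc 0 1 →
      (∀ i ∈ s, ENNReal.ofReal (∑ j ∈ s, d j) ≤ μ i S) →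
      ∃ X : Fin n → Set ℝ, (∀ i, MeasurableSet (X i)) ∧ (∀ i ∉ s, X i = ∅) ∧
        (∀ i j, i ≠ j → Disjoint (X i) (X j)) ∧ (⋃ i ∈ s, X i) = S ∧
        (∀ i ∈ s, ENNReal.ofReal (d i) ≤ μ i (X i)) := by
  classical
  intro s
  induction s using Finset.strongInduction with
  | _ s ih =>
    intro hs S hSm hSsub hval
    by_cases hone : s.card = 1
    · -- singleton case
      obtain ⟨i, rfl⟩ := Finset.card_eq_one.mp hone
      refine ⟨fun j => if j = i then S else ∅, ?_, ?_, ?_, ?_, ?_⟩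
      · intro j; by_cases hj : j = i <;> simp [hj, hSm]
      · intro j hj
        rw [Finset.mem_singleton] at hj
        simp [hj]
      · intro a b hab
        by_cases ha : a = i <;> by_cases hb : b = i
        · exact absurd (ha.trans hb.symm) hab
        · simp [ha, hb]
        · simp [ha, hb]
        · simp [ha, hb]
      · simp
      · intro j hj
        rw [Finset.mem_singleton] at hj
        subst hj
        have := hval j (Finset.mem_singleton_self j)
        simpa using this
    · -- at least two players
      have hcard : 1 < s.card := lt_of_le_of_ne hs.card_pos (fun e => hone e.symm)
      obtain ⟨i₀, hi₀s, A, hAm, hAsub, hAval, hArest⟩ :=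
        exists_winner μ hac d hd s hs S hSm hSsub hval
      set s' := s.erase i₀ with hs'def
      have hs' : s'.Nonempty := by
        obtain ⟨b, hb, hbne⟩ := (Finset.one_lt_card_iff_nontrivial.mp hcard).exists_ne i₀
        exact ⟨b, Finset.mem_erase.mpr ⟨hbne, hb⟩⟩
      have hssub : s' ⊂ s := Finset.erase_ssubset hi₀s
      have hsum' : ∑ j ∈ s', d j = (∑ j ∈ s, d j) - d i₀ :=
        Finset.sum_erase_eq_sub hi₀s
      have hval' : ∀ j ∈ s', ENNReal.ofReal (∑ k ∈ s', d k) ≤ μ j (S \ A) := by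
        intro j hj
        rw [hsum']
        exact hArest j (Finset.mem_of_mem_erase hj)
      obtain ⟨Y, hYm, hYe, hYd, hYu, hYv⟩ := ih s' hssub hs' (S \ A)
        (hSm.diff hAm) (fun x hx => hSsub hx.1) hval'
      have hYsub : ∀ j, Y j ⊆ S \ A := by
        intro j
        by_cases hj : j ∈ s'
        · rw [← hYu]; exact subset_biUnion_of_mem hj
        · rw [hYe j hj]; exact empty_subset _
      refine ⟨fun j => if j = i₀ then A else Y j, ?_, ?_, ?_, ?_, ?_⟩
      · intro j; by_cases hj : j = i₀ <;> simp [hj, hAm, hYm j]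
      · intro j hj
        have hne : j ≠ i₀ := fun e => hj (e ▸ hi₀s)
        have : j ∉ s' := fun hmem => hj (Finset.mem_of_mem_erase hmem)
        simp [hne, hYe j this]
      · intro a b hab
        by_cases ha : a = i₀ <;> by_cases hb : b = i₀
        · exact absurd (ha.trans hb.symm) hab
        · subst ha
          simp only [if_pos rfl, if_neg hb]
          exact disjoint_sdiff_right.mono_right (hYsub b)
        · subst hb
          simp only [if_pos rfl, if_neg ha]
          exact (disjoint_sdiff_right.mono_right (hYsub a)).symm
        · simp only [if_neg ha, if_neg hb]
          exact hYd a b hab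
      · rw [show s = insert i₀ s' from (Finset.insert_erase hi₀s).symm,
          Finset.set_biUnion_insert]
        rw [if_pos rfl]
        have hcong : ⋃ j ∈ s', (if j = i₀ then A else Y j) = ⋃ j ∈ s', Y j := by
          apply iUnion₂_congr
          intro j hj
          rw [if_neg (Finset.ne_of_mem_erase hj)]
        rw [hcong, hYu, union_diff_cancel hAsub]
      · intro j hj
        by_cases hje : j = i₀
        · subst hje; simpa using hAval
        · simp only [if_neg hje]
          exact hYv j (Finset.mem_erase.mpr ⟨hje, hj⟩)

end PropDiv

theorem proportional_division_exists_interval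
    (n : ℕ) (hn : 1 ≤ n) (D : ℝ) (hD : 0 < D)
    (μ : Fin n → Measure ℝ) [∀ i, IsFiniteMeasure (μ i)]
    (hac : ∀ i, μ i ≪ volume)
    (htot : ∀ i, μ i (Set.Icc 0 1) = ENNReal.ofReal D)
    (d : Fin n → ℝ) (hd : ∀ i, 0 < d i) (hsum : ∑ i, d i = D) :
    ∃ X : Fin n → Set ℝ,
      (∀ i, MeasurableSet (X i)) ∧
      (∀ i j, i ≠ j → Disjoint (X i) (X j)) ∧
      (⋃ i, X i) = Set.Icc 0 1 ∧
      (∀ i, ENNReal.ofReal (d i) ≤ μ i (X i)) := by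
  classical
  haveI : Nonempty (Fin n) := ⟨⟨0, hn⟩⟩
  have huniv : (Finset.univ : Finset (Fin n)).Nonempty := Finset.univ_nonempty
  have hval : ∀ i ∈ Finset.univ,
      ENNReal.ofReal (∑ j ∈ Finset.univ, d j) ≤ μ i (Set.Icc 0 1) := by
    intro i _
    rw [hsum, htot i]
  obtain ⟨X, hXm, hXe, hXd, hXu, hXv⟩ := PropDiv.key μ hac d hd Finset.univ huniv
    (Set.Icc 0 1) measurableSet_Icc (fun x hx => hx) hval
  refine ⟨X, hXm, hXd, ?_, fun i => hXv i (Finset.mem_univ i)⟩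
  rw [← hXu]
  simp
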